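/- Let Δ be a metric, S_j a cluster of m points with center x* and average radius r = Δ(S_j, x*)/m, and C a finite set of centers. If a point p ∈ S_j satisfies Δ(p, C) / Δ(S_j, C) ≤ (ε/2)/m for some 0 < ε < 2, then Δ(p, C) ≤ (ε/2)/(1 − ε/2) · (r + Δ(p, x*)). -/

import Mathlib

/-- Distance from a point to its nearest center in `C`. -/
noncomputable def ptCost {X : Type*} [MetricSpace X] (p : X) (C : Finset X) : ℝ :=
  sInf ((fun c => dist p c) '' (C : Set X))

/-- Clustering cost of a multiset of points with center set `C`. -/
noncomputable def clCost {X : Type*} [MetricSpace X] (S : Multiset X) (C : Finset X) : ℝ :=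
  (S.map fun x => ptCost x C).sum

lemma ptCost_nonneg {X : Type*} [MetricSpace X] (p : X) (C : Finset X) :
    0 ≤ ptCost p C := by
  apply Real.sInf_nonneg
  rintro x ⟨c, _, rfl⟩
  exact dist_nonneg

lemma ptCost_le {X : Type*} [MetricSpace X] (p : X) {C : Finset X} {c : X} (hc : c ∈ C) :
    ptCost p C ≤ dist p c := by
  refine csInf_le ⟨0, ?_⟩ ⟨c, hc, rfl⟩
  rintro x ⟨d, _, rfl⟩
  exact dist_nonneg

lemma exists_ptCost {X : Type*} [MetricSpace X] (p : X) {C : Finset X} (hC : C.Nonempty) :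
    ∃ c ∈ C, ptCost p C = dist p c := by
  have hfin : ((fun c => dist p c) '' (C : Set X)).Finite :=
    (C.finite_toSet).image _
  have hne : ((fun c => dist p c) '' (C : Set X)).Nonempty :=
    ⟨dist p hC.choose, hC.choose, hC.choose_spec, rfl⟩
  obtain ⟨c, hc, hval⟩ := hne.csInf_mem hfin
  exact ⟨c, hc, hval.symm⟩

/-- If `Δ(p, C)/Δ(S_j, C) ≤ (ε/2)/m`, then
`Δ(p, C) ≤ (ε/2)/(1-ε/2) · (r + Δ(p, x*))` where `r = Δ(S_j, x*)/m`. -/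
theorem stmt_16 {X : Type*} [MetricSpace X] (Sj : Multiset X) (xstar : X)
    (C : Finset X) (hC : C.Nonempty) (ε : ℝ) (hε0 : 0 < ε) (hε2 : ε < 2)
    (p : X) (hp : p ∈ Sj)
    (hyp : ptCost p C / clCost Sj C ≤ (ε / 2) / (Multiset.card Sj : ℝ)) :
    ptCost p C ≤ (ε / 2) / (1 - ε / 2) *
      ((Sj.map fun q => dist q xstar).sum / (Multiset.card Sj : ℝ) + dist p xstar) := by
  set D := ptCost p C with hD
  set m : ℝ := (Multiset.card Sj : ℝ) with hm
  have hm0 : 0 < m := by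
    have h1 : 0 < Multiset.card Sj := Multiset.card_pos_iff_exists_mem.mpr ⟨p, hp⟩
    rw [hm]
    exact_mod_cast h1
  obtain ⟨c, hcC, hDc⟩ := exists_ptCost p hC
  have hDnn : 0 ≤ D := ptCost_nonneg p C
  -- sum of dist q xstar is nonneg
  have hRnn : 0 ≤ (Sj.map fun q => dist q xstar).sum := by
    apply Multiset.sum_nonneg
    intro x hx
    obtain ⟨q, _, rfl⟩ := Multiset.mem_map.mp hx
    exact dist_nonneg
  have hdpnn : 0 ≤ dist p xstar := dist_nonneg
  have hε2' : 0 < 1 - ε / 2 := by linarith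
  have hεpos : 0 < ε / 2 := by linarith
  have hRHSfac : 0 ≤ (Sj.map fun q => dist q xstar).sum / m + dist p xstar := by
    positivity
  -- D ≤ clCost
  have hDle : D ≤ clCost Sj C := by
    rw [clCost]
    have := Multiset.single_le_sum (s := Sj.map fun x => ptCost x C)
      (fun x hx => by
        obtain ⟨q, _, rfl⟩ := Multiset.mem_map.mp hx
        exact ptCost_nonneg q C) D
      (Multiset.mem_map.mpr ⟨p, hp, rfl⟩)
    exact this
  have hclnn : 0 ≤ clCost Sj C := le_trans hDnn hDle
  -- clCost bound
  have hclbound : clCost Sj C ≤ (Sj.map fun q => dist q xstar).sum + m * (dist p xstar + D) := by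
    have hpt : ∀ q ∈ Sj, ptCost q C ≤ dist q xstar + (dist p xstar + D) := by
      intro q _
      calc ptCost q C ≤ dist q c := ptCost_le q hcC
        _ ≤ dist q xstar + dist xstar c := dist_triangle q xstar c
        _ ≤ dist q xstar + (dist xstar p + dist p c) := by
            linarith [dist_triangle xstar p c]
        _ = dist q xstar + (dist p xstar + D) := by
            rw [dist_comm xstar p, hD, hDc]
    calc clCost Sj C ≤ (Sj.map fun q => dist q xstar + (dist p xstar + D)).sum := by
          apply Multiset.sum_map_le_sum_map
          exact hpt
      _ = (Sj.map fun q => dist q xstar).sum + m * (dist p xstar + D) := by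
          rw [Multiset.sum_map_add]
          congr 1
          rw [Multiset.map_const', Multiset.sum_replicate, hm]
          simp [nsmul_eq_mul]
          ring
  rcases eq_or_lt_of_le hclnn with hcl0 | hclpos
  · -- clCost = 0, so D = 0
    have hD0 : D = 0 := le_antisymm (by rw [← hcl0] at hDle; exact hDle) hDnn
    rw [hD0]
    positivity
  · -- cross multiply hypothesis
    have key : D * m ≤ ε / 2 * clCost Sj C := by
      have := (div_le_div_iff₀ hclpos hm0).mp hyp
      linarith
    have key2 : D * m ≤ ε / 2 * ((Sj.map fun q => dist q xstar).sum + m * (dist p xstar + D)) := by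
      calc D * m ≤ ε / 2 * clCost Sj C := key
        _ ≤ _ := by
            apply mul_le_mul_of_nonneg_left hclbound (le_of_lt hεpos)
    -- divide key2 by m : D ≤ ε/2 * (R/m + dist p xstar + D)
    have key3 : D ≤ ε / 2 * ((Sj.map fun q => dist q xstar).sum / m + dist p xstar + D) := by
      rw [← mul_le_mul_iff_of_pos_right hm0]
      calc D * m ≤ ε / 2 * ((Sj.map fun q => dist q xstar).sum + m * (dist p xstar + D)) := key2
        _ = ε / 2 * ((Sj.map fun q => dist q xstar).sum / m + dist p xstar + D) * m := by
            field_simp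
            ring
    -- rearrange
    rw [div_mul_eq_mul_div, le_div_iff₀ hε2']
    nlinarith [key3]
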